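/- Let n > 1 be a real number and W : ℝ → ℝ be continuously differentiable on [1,∞) with W'(1) = 0 and with W' differentiable at 1 (write W''(1) for its derivative there), and suppose λ ↦ W'(λ)/(λⁿ − 1) is integrable on (1,∞). Define P(c) = (1 + cⁿ)^{(n−1)/n} · ∫_{(1+cⁿ)^{1/n}}^{∞} W'(λ)/(λⁿ − 1) dλ for c > 0. If ∫₁^{∞} W'(λ)/(λⁿ − 1) dλ < W''(1)/(n(n−1)), then there exists δ > 0 such that for every c ∈ (0, δ), P is differentiable at c and its derivative is strictly negative (subcritical bifurcation). -/

import Mathlib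

open Real MeasureTheory Set Filter Topology

/-- Subcritical cavitation: if the critical dead load is less than W''(1)/(n(n-1)),
then the dead-load function P(c) has strictly negative derivative for all
sufficiently small cavity radii c > 0. -/
theorem subcritical_cavitation (n : ℝ) (hn : 1 < n) (W : ℝ → ℝ) (W'' : ℝ)
    (hW : ContDiffOn ℝ 1 W (Ici 1))
    (hW1 : deriv W 1 = 0)
    (hW2 : HasDerivAt (deriv W) W'' 1)
    (hInt : IntegrableOn (fun l => deriv W l / (l ^ n - 1)) (Ioi 1))
    (P : ℝ → ℝ)
    (hP : ∀ c : ℝ, 0 < c → P c = (1 + c ^ n) ^ ((n - 1) / n) *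
      ∫ l in Ioi ((1 + c ^ n) ^ (1 / n)), deriv W l / (l ^ n - 1))
    (hcrit : (∫ l in Ioi (1 : ℝ), deriv W l / (l ^ n - 1)) < W'' / (n * (n - 1))) :
    ∃ δ > 0, ∀ c ∈ Ioo (0 : ℝ) δ, ∃ p, HasDerivAt P p c ∧ p < 0 := by
  have hn0 : (0:ℝ) < n := lt_trans one_pos hn
  have hn0' : n ≠ 0 := hn0.ne'
  set f : ℝ → ℝ := fun l => deriv W l / (l ^ n - 1) with hf_def
  set P₀ : ℝ := ∫ l in Ioi (1:ℝ), f l with hP₀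
  set I : ℝ → ℝ := fun x => ∫ l in (1:ℝ)..x, f l with hI_def
  -- f is measurable
  have hmeas : Measurable f := by
    apply Measurable.div (measurable_deriv W)
    exact (measurable_id.pow_const n).sub measurable_const
  -- f is continuous on Ioi 1
  have hfcont : ContinuousOn f (Ioi (1:ℝ)) := by
    apply ContinuousOn.div
    · exact (hW.mono Ioi_subset_Ici_self).continuousOn_deriv_of_isOpen isOpen_Ioi le_rfl
    · intro x hx
      exact ((Real.continuousAt_rpow_const x n
        (Or.inl (ne_of_gt (lt_trans one_pos hx)))).sub continuousAt_const).continuousWithinAt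
    · intro x hx
      have : (1:ℝ) < x ^ n := Real.one_lt_rpow_iff_of_pos (lt_trans one_pos hx) |>.2 (Or.inl ⟨hx, hn0⟩)
      linarith
  -- the limit of f at 1 from the right is W''/n
  have hf_lim : Tendsto f (𝓝[>] (1:ℝ)) (𝓝 (W'' / n)) := by
    have h1 : Tendsto (fun s => deriv W s / (s - 1)) (𝓝[>] (1:ℝ)) (𝓝 W'') := by
      have := hasDerivAt_iff_tendsto_slope.1 hW2
      have h2 : Tendsto (slope (deriv W) 1) (𝓝[>] (1:ℝ)) (𝓝 W'') :=
        this.mono_left (nhdsWithin_mono 1 (fun x hx => ne_of_gt hx))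
      refine h2.congr' ?_
      filter_upwards [self_mem_nhdsWithin] with x hx
      simp [slope, hW1, sub_ne_zero, ne_of_gt (mem_Ioi.1 hx), vsub_eq_sub, div_eq_inv_mul]
    have h2 : Tendsto (fun s => (s ^ n - 1) / (s - 1)) (𝓝[>] (1:ℝ)) (𝓝 n) := by
      have hd : HasDerivAt (fun x : ℝ => x ^ n) n 1 := by
        have := Real.hasDerivAt_rpow_const (x := (1:ℝ)) (p := n) (Or.inl one_ne_zero)
        simpa using this
      have := hasDerivAt_iff_tendsto_slope.1 hd
      have h2 : Tendsto (slope (fun x : ℝ => x ^ n) 1) (𝓝[>] (1:ℝ)) (𝓝 n) :=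
        this.mono_left (nhdsWithin_mono 1 (fun x hx => ne_of_gt hx))
      refine h2.congr' ?_
      filter_upwards [self_mem_nhdsWithin] with x hx
      simp [slope, Real.one_rpow, vsub_eq_sub, div_eq_inv_mul]
    have h3 := h1.div h2 hn0'
    refine h3.congr' ?_
    filter_upwards [self_mem_nhdsWithin] with x hx
    have hx1 : x - 1 ≠ 0 := sub_ne_zero.2 (ne_of_gt hx)
    simp only [Pi.div_apply]
    rw [div_div_div_cancel_right₀ hx1]
  -- the primitive I tends to 0 at 1 from the right
  have hI_lim : Tendsto I (𝓝[>] (1:ℝ)) (𝓝 0) := by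
    have hint12 : IntervalIntegrable f volume 1 2 := by
      rw [intervalIntegrable_iff_integrableOn_Ioc_of_le one_le_two]
      exact hInt.mono_set Ioc_subset_Ioi_self
    have := intervalIntegral.continuousWithinAt_primitive (μ := volume) (f := f)
      (a := 1) (b₀ := 1) (b₁ := 1) (b₂ := 2) (measure_singleton 1) (by simpa using hint12)
    have := this.tendsto
    simp only [intervalIntegral.integral_same] at this
    have hmono : 𝓝[>] (1:ℝ) ≤ 𝓝[Icc (1:ℝ) 2] 1 := by
      rw [← nhdsWithin_Ioo_eq_nhdsGT (show (1:ℝ) < 2 by norm_num)]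
      exact nhdsWithin_mono 1 Ioo_subset_Icc_self
    exact this.mono_left hmono
  -- the key quantity R
  set R : ℝ → ℝ := fun t => (n - 1) * t ^ (-(1/n)) * (P₀ - I (t ^ (1/n))) - f (t ^ (1/n))
    with hR_def
  -- R tends to a negative limit as t → 1⁺
  have hmap : Tendsto (fun t : ℝ => t ^ (1/n)) (𝓝[>] (1:ℝ)) (𝓝[>] (1:ℝ)) := by
    rw [tendsto_nhdsWithin_iff]
    constructor
    · have : Tendsto (fun t : ℝ => t ^ (1/n)) (𝓝 (1:ℝ)) (𝓝 ((1:ℝ) ^ (1/n))) :=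
        (Real.continuousAt_rpow_const 1 (1/n) (Or.inl one_ne_zero)).tendsto
      rw [Real.one_rpow] at this
      exact this.mono_left nhdsWithin_le_nhds
    · filter_upwards [self_mem_nhdsWithin] with t ht
      exact Real.one_lt_rpow_iff_of_pos (lt_trans one_pos ht) |>.2 (Or.inl ⟨ht, by positivity⟩)
  have hR_lim : Tendsto R (𝓝[>] (1:ℝ)) (𝓝 ((n-1) * 1 * (P₀ - 0) - W''/n)) := by
    have h1 : Tendsto (fun t : ℝ => t ^ (-(1/n))) (𝓝[>] (1:ℝ)) (𝓝 1) := by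
      have : Tendsto (fun t : ℝ => t ^ (-(1/n))) (𝓝 (1:ℝ)) (𝓝 ((1:ℝ) ^ (-(1/n)))) :=
        (Real.continuousAt_rpow_const 1 (-(1/n)) (Or.inl one_ne_zero)).tendsto
      rw [Real.one_rpow] at this
      exact this.mono_left nhdsWithin_le_nhds
    exact ((tendsto_const_nhds.mul h1).mul
      (tendsto_const_nhds.sub (hI_lim.comp hmap))).sub (hf_lim.comp hmap)
  have hLneg : (n-1) * 1 * (P₀ - 0) - W''/n < 0 := by
    have h1 : 0 < n - 1 := by linarith
    have h2 : P₀ < W'' / (n * (n-1)) := hcrit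
    have : (n-1) * P₀ < (n-1) * (W'' / (n * (n-1))) := by
      exact (mul_lt_mul_iff_right₀ h1).2 h2
    have h3 : (n-1) * (W'' / (n * (n-1))) = W'' / n := by
      field_simp
    rw [h3] at this
    linarith
  -- extract a right neighborhood where R < 0
  have hRneg : ∀ᶠ t in 𝓝[>] (1:ℝ), R t < 0 := hR_lim.eventually_lt_const hLneg
  obtain ⟨u, hu1, hu⟩ := mem_nhdsGT_iff_exists_Ioo_subset.1 hRneg
  have hu1' : (1:ℝ) < u := hu1
  -- choose δ
  refine ⟨(u - 1) ^ (1/n), Real.rpow_pos_of_pos (sub_pos.2 hu1') _, ?_⟩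
  intro c hc
  obtain ⟨hc0, hcu⟩ := hc
  set t : ℝ := 1 + c ^ n with ht_def
  have hcn_pos : 0 < c ^ n := Real.rpow_pos_of_pos hc0 n
  have ht1 : 1 < t := by simpa [ht_def] using hcn_pos
  have ht0 : 0 < t := lt_trans one_pos ht1
  have htu : t < u := by
    have h1 : c ^ n < ((u-1) ^ (1/n)) ^ n := Real.rpow_lt_rpow hc0.le hcu hn0
    have h2 : ((u-1:ℝ) ^ (1/n)) ^ n = u - 1 := by
      rw [← Real.rpow_mul (sub_pos.2 hu1').le, one_div_mul_cancel hn0', Real.rpow_one]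
    rw [h2] at h1
    simp only [ht_def]
    linarith
  set s : ℝ := t ^ (1/n) with hs_def
  have hs1 : 1 < s := Real.one_lt_rpow_iff_of_pos ht0 |>.2 (Or.inl ⟨ht1, by positivity⟩)
  have hs0 : 0 < s := lt_trans one_pos hs1
  -- derivative of x ↦ 1 + x^n at c
  have hg : HasDerivAt (fun x : ℝ => 1 + x ^ n) (n * c ^ (n-1)) c :=
    (Real.hasDerivAt_rpow_const (Or.inl hc0.ne')).const_add 1
  -- derivative of A = (1+x^n)^((n-1)/n)
  have hA : HasDerivAt (fun x : ℝ => (1 + x ^ n) ^ ((n-1)/n))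
      ((n-1)/n * t ^ ((n-1)/n - 1) * (n * c ^ (n-1))) c := by
    have := (Real.hasDerivAt_rpow_const (p := (n-1)/n) (Or.inl ht0.ne')).comp c hg
    exact this
  -- derivative of s(x) = (1+x^n)^(1/n)
  have hs' : HasDerivAt (fun x : ℝ => (1 + x ^ n) ^ (1/n))
      (1/n * t ^ (1/n - 1) * (n * c ^ (n-1))) c := by
    have := (Real.hasDerivAt_rpow_const (p := 1/n) (Or.inl ht0.ne')).comp c hg
    exact this
  -- derivative of the primitive at s
  have hint1s : IntervalIntegrable f volume 1 s := by
    rw [intervalIntegrable_iff_integrableOn_Ioc_of_le hs1.le]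
    exact hInt.mono_set Ioc_subset_Ioi_self
  have hIs : HasDerivAt I (f s) s :=
    intervalIntegral.integral_hasDerivAt_right hint1s
      (hmeas.stronglyMeasurable.stronglyMeasurableAtFilter)
      (hfcont.continuousAt (Ioi_mem_nhds hs1))
  -- F(x) = ∫_{Ioi x} f  equals P₀ - I x for x > 1
  have hFeq : ∀ x : ℝ, 1 < x → (∫ l in Ioi x, f l) = P₀ - I x := by
    intro x hx
    have hsplit : (∫ l in Ioc 1 x, f l) + (∫ l in Ioi x, f l) = P₀ := by
      rw [hP₀, ← setIntegral_union (Ioc_disjoint_Ioi le_rfl) measurableSet_Ioi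
        (hInt.mono_set Ioc_subset_Ioi_self) (hInt.mono_set (Ioi_subset_Ioi hx.le)),
        Ioc_union_Ioi_eq_Ioi hx.le]
    have : I x = ∫ l in Ioc 1 x, f l := intervalIntegral.integral_of_le hx.le
    linarith [hsplit]
  have hF : HasDerivAt (fun x => ∫ l in Ioi x, f l) (-(f s)) s := by
    have h1 : HasDerivAt (fun x => P₀ - I x) (-(f s)) s := by
      exact ((hasDerivAt_const s P₀).sub hIs).congr_deriv (by ring)
    refine h1.congr_of_eventuallyEq ?_
    filter_upwards [Ioi_mem_nhds hs1] with x hx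
    exact hFeq x hx
  -- derivative of B(x) = ∫_{Ioi (1+x^n)^(1/n)} f
  have hB : HasDerivAt (fun x : ℝ => ∫ l in Ioi ((1 + x ^ n) ^ (1/n)), f l)
      (-(f s) * (1/n * t ^ (1/n - 1) * (n * c ^ (n-1)))) c := by have := hF.comp c hs'; exact this
  -- combine into derivative of the product
  have hprod : HasDerivAt
      (fun x : ℝ => (1 + x ^ n) ^ ((n-1)/n) * ∫ l in Ioi ((1 + x ^ n) ^ (1/n)), f l)
      ((n-1)/n * t ^ ((n-1)/n - 1) * (n * c ^ (n-1)) * (∫ l in Ioi s, f l)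
        + (1 + c ^ n) ^ ((n-1)/n) * (-(f s) * (1/n * t ^ (1/n - 1) * (n * c ^ (n-1)))))
      c := hA.mul hB
  -- P agrees with the formula near c
  have hPd : HasDerivAt P
      ((n-1)/n * t ^ ((n-1)/n - 1) * (n * c ^ (n-1)) * (∫ l in Ioi s, f l)
        + (1 + c ^ n) ^ ((n-1)/n) * (-(f s) * (1/n * t ^ (1/n - 1) * (n * c ^ (n-1)))))
      c := by
    refine hprod.congr_of_eventuallyEq ?_
    filter_upwards [Ioi_mem_nhds hc0] with x hx
    exact hP x hx
  refine ⟨_, hPd, ?_⟩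
  -- now show the derivative is negative
  have hRt : R t < 0 := hu ⟨ht1, htu⟩
  have hval : (n-1)/n * t ^ ((n-1)/n - 1) * (n * c ^ (n-1)) * (∫ l in Ioi s, f l)
        + (1 + c ^ n) ^ ((n-1)/n) * (-(f s) * (1/n * t ^ (1/n - 1) * (n * c ^ (n-1))))
      = (n * c ^ (n-1)) * (1/n) * R t := by
    rw [hFeq s hs1]
    have e1 : (n-1)/n - 1 = -(1/n) := by field_simp; ring
    have e2 : t ^ ((n-1)/n) * t ^ (1/n - 1) = 1 := by
      rw [← Real.rpow_add ht0]
      have : (n-1)/n + (1/n - 1) = 0 := by field_simp; ring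
      rw [this, Real.rpow_zero]
    rw [hR_def, e1]
    simp only [← ht_def, hs_def]
    linear_combination (-(n * c ^ (n-1)) * (1/n) * f (t ^ (1/n))) * e2
  rw [hval]
  have hc1 : 0 < c ^ (n-1) := Real.rpow_pos_of_pos hc0 (n-1)
  have : 0 < n * c ^ (n-1) * (1/n) := by positivity
  exact mul_neg_of_pos_of_neg this hRt
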